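/- Necessity direction of the paper's Proposition 1, step 4: with 𝒦 := Φue − Φuw * Φxw⁻¹ * Φxe, one has (1 − ZA − ZB * 𝒦 * 𝒞) * Φxw = 1; consequently 1 − ZA − ZB * 𝒦 * 𝒞 is invertible and Φxw = (1 − ZA − ZB * 𝒦 * 𝒞)⁻¹. -/

import Mathlib

open Matrix

/-- `M` is block lower triangular: the `(t,s)` block vanishes whenever `s > t`. -/
def IsBlockLowerTri {T a b : ℕ} (M : Matrix (Fin T × Fin a) (Fin T × Fin b) ℝ) : Prop :=
  ∀ (t s : Fin T) (i : Fin a) (j : Fin b), t < s → M (t, i) (s, j) = 0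

/-- `M` is strictly block lower triangular: the `(t,s)` block vanishes whenever `s ≥ t`. -/
def IsStrictBlockLowerTri {T a b : ℕ} (M : Matrix (Fin T × Fin a) (Fin T × Fin b) ℝ) : Prop :=
  ∀ (t s : Fin T) (i : Fin a) (j : Fin b), t ≤ s → M (t, i) (s, j) = 0

/-- `M` is block diagonal: the `(t,s)` block vanishes whenever `s ≠ t`. -/
def IsBlockDiag {T a b : ℕ} (M : Matrix (Fin T × Fin a) (Fin T × Fin b) ℝ) : Prop :=
  ∀ (t s : Fin T) (i : Fin a) (j : Fin b), t ≠ s → M (t, i) (s, j) = 0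

lemma strict_mul_lower {T a b c : ℕ}
    {M : Matrix (Fin T × Fin a) (Fin T × Fin b) ℝ}
    {N : Matrix (Fin T × Fin b) (Fin T × Fin c) ℝ}
    (hM : IsStrictBlockLowerTri M) (hN : IsBlockLowerTri N) :
    IsStrictBlockLowerTri (M * N) := by
  intro t s i j hts
  rw [Matrix.mul_apply]
  apply Finset.sum_eq_zero
  rintro ⟨r, m⟩ -
  by_cases h : t ≤ r
  · rw [hM t r i m h, zero_mul]
  · push_neg at h
    rw [hN r s m j (lt_of_lt_of_le h hts), mul_zero]

lemma strict_pow_entry {T a : ℕ} {N : Matrix (Fin T × Fin a) (Fin T × Fin a) ℝ}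
    (hN : IsStrictBlockLowerTri N) :
    ∀ (k : ℕ) (t s : Fin T) (i j : Fin a), (t : ℕ) < (s : ℕ) + k → (N ^ k) (t, i) (s, j) = 0 := by
  intro k
  induction k with
  | zero =>
    intro t s i j h
    simp only [Nat.add_zero] at h
    rw [pow_zero, Matrix.one_apply_ne (by simp [Prod.ext_iff]; intro hts; omega)]
  | succ k ih =>
    intro t s i j h
    rw [pow_succ', Matrix.mul_apply]
    apply Finset.sum_eq_zero
    rintro ⟨r, m⟩ -
    by_cases hr : t ≤ r
    · rw [hN t r i m hr, zero_mul]
    · push_neg at hr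
      rw [ih r s m j (by omega), mul_zero]

lemma strict_nilpotent {T a : ℕ} {N : Matrix (Fin T × Fin a) (Fin T × Fin a) ℝ}
    (hN : IsStrictBlockLowerTri N) : IsNilpotent N := by
  refine ⟨T, ?_⟩
  ext ⟨t, i⟩ ⟨s, j⟩
  rw [strict_pow_entry hN T t s i j (by omega)]
  rfl

theorem stmt_11 (T dx du dy : ℕ) (hT : 1 ≤ T)
    (ZA : Matrix (Fin T × Fin dx) (Fin T × Fin dx) ℝ)
    (ZB : Matrix (Fin T × Fin dx) (Fin T × Fin du) ℝ)
    (𝒞 : Matrix (Fin T × Fin dy) (Fin T × Fin dx) ℝ)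
    (hZA : IsStrictBlockLowerTri ZA) (hZB : IsStrictBlockLowerTri ZB)
    (hC : IsBlockDiag 𝒞)
    (Φxw : Matrix (Fin T × Fin dx) (Fin T × Fin dx) ℝ)
    (Φxe : Matrix (Fin T × Fin dx) (Fin T × Fin dy) ℝ)
    (Φuw : Matrix (Fin T × Fin du) (Fin T × Fin dx) ℝ)
    (Φue : Matrix (Fin T × Fin du) (Fin T × Fin dy) ℝ)
    (hΦxw : IsBlockLowerTri Φxw) (hΦxe : IsBlockLowerTri Φxe)
    (hΦuw : IsBlockLowerTri Φuw) (hΦue : IsBlockLowerTri Φue)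
    (haff1 : (1 - ZA) * Φxw - ZB * Φuw = 1)
    (haff2 : (1 - ZA) * Φxe - ZB * Φue = 0)
    (haff3 : Φxw * (1 - ZA) - Φxe * 𝒞 = 1)
    (haff4 : Φuw * (1 - ZA) - Φue * 𝒞 = 0) :
    (1 - ZA - ZB * (Φue - Φuw * Φxw⁻¹ * Φxe) * 𝒞) * Φxw = 1 ∧
      IsUnit (1 - ZA - ZB * (Φue - Φuw * Φxw⁻¹ * Φxe) * 𝒞).det ∧
      Φxw = (1 - ZA - ZB * (Φue - Φuw * Φxw⁻¹ * Φxe) * 𝒞)⁻¹ := by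
  have h1 : (1 - ZA) * Φxw = 1 + ZB * Φuw := sub_eq_iff_eq_add.mp haff1
  have hUB : IsUnit (1 + ZB * Φuw) :=
    (strict_nilpotent (strict_mul_lower hZB hΦuw)).isUnit_one_add
  have hdet : IsUnit Φxw.det := by
    have hd := congrArg Matrix.det h1
    rw [Matrix.det_mul] at hd
    have hBdet : IsUnit (1 + ZB * Φuw).det := (Matrix.isUnit_iff_isUnit_det _).mp hUB
    rw [← hd] at hBdet
    exact isUnit_of_mul_isUnit_right hBdet
  have hinv : Φxw⁻¹ * Φxw = 1 := Matrix.nonsing_inv_mul _ hdet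
  have hxe : Φxe * 𝒞 = Φxw * (1 - ZA) - 1 :=
    eq_sub_iff_add_eq.mpr (sub_eq_iff_eq_add'.mp haff3).symm
  have hue : Φue * 𝒞 = Φuw * (1 - ZA) := (sub_eq_zero.mp haff4).symm
  have e1 : Φuw * Φxw⁻¹ * Φxe * 𝒞 = Φuw * (1 - ZA) - Φuw * Φxw⁻¹ := by
    rw [Matrix.mul_assoc (Φuw * Φxw⁻¹) Φxe 𝒞, hxe, Matrix.mul_sub (Φuw * Φxw⁻¹),
        Matrix.mul_one, Matrix.mul_assoc Φuw Φxw⁻¹ (Φxw * (1 - ZA)),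
        ← Matrix.mul_assoc Φxw⁻¹ Φxw (1 - ZA), hinv, Matrix.one_mul]
  have hK : (Φue - Φuw * Φxw⁻¹ * Φxe) * 𝒞 = Φuw * Φxw⁻¹ := by
    rw [Matrix.sub_mul, hue, e1, sub_sub_cancel]
  have key : (1 - ZA - ZB * (Φue - Φuw * Φxw⁻¹ * Φxe) * 𝒞) * Φxw = 1 := by
    rw [Matrix.sub_mul, Matrix.mul_assoc ZB (Φue - Φuw * Φxw⁻¹ * Φxe) 𝒞, hK,
        Matrix.mul_assoc ZB (Φuw * Φxw⁻¹) Φxw, Matrix.mul_assoc Φuw Φxw⁻¹ Φxw,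
        hinv, Matrix.mul_one]
    exact haff1
  refine ⟨key, ?_, ?_⟩
  · have hd := congrArg Matrix.det key
    rw [Matrix.det_mul, Matrix.det_one] at hd
    exact IsUnit.of_mul_eq_one _ hd
  · exact (Matrix.inv_eq_right_inv key).symm
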